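/- Let p, q be positive integers, d = gcd(p,q), m, n positive integers with mp - nq = d, and ω = (-q x^{q-1} - q y Δ) dx + (p y^{p-1} + p x Δ) dy with Δ = Σ a_{ij} x^i y^j. Under E(u,v) = (u^n v^{p/d}, u^m v^{q/d}), the pullback satisfies E*ω / (u^{nq-1} v^{pq/d - 1}) = v(-qn + mp u^d + D̃(u,v)) du + (pq/d) u (u^d - 1) dv, where D̃(u,v) = d Σ_{i,j} a_{ij} u^{ni + mj + m + n - nq} v^{(pi + qj + p + q - pq)/d}. -/

import Mathlib

open MvPowerSeries

/-- `E^*(Δ) = Σ a_{ij} u^{ni+mj} v^{(pi+qj)/d}`, the pullback of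
`Δ(x,y) = Σ a_{ij} x^i y^j` under `E(u,v) = (u^n v^{p/d}, u^m v^{q/d})`
(meaningful for `m, n ≥ 1` and `d ∣ p`, `d ∣ q`). -/
noncomputable def pullD (Δ : MvPowerSeries (Fin 2) ℂ) (n m p q d : ℕ) :
    MvPowerSeries (Fin 2) ℂ :=
  fun e =>
    ∑ ij ∈ (Finset.range (e 0 + 1) ×ˢ Finset.range (e 0 + 1)).filter
        (fun ij => n * ij.1 + m * ij.2 = e 0 ∧ p * ij.1 + q * ij.2 = d * e 1),
      MvPowerSeries.coeff (R := ℂ) (Finsupp.single 0 ij.1 + Finsupp.single 1 ij.2) Δ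

/-- `D̃(u,v) = d Σ a_{ij} u^{ni+mj+m+n-nq} v^{(pi+qj+p+q-pq)/d}`. -/
noncomputable def tildeD (Δ : MvPowerSeries (Fin 2) ℂ) (n m p q d : ℕ) :
    MvPowerSeries (Fin 2) ℂ :=
  fun e =>
    (d : ℂ) * ∑ ij ∈ (Finset.range (e 0 + n * q + 1) ×ˢ Finset.range (e 0 + n * q + 1)).filter
        (fun ij => n * ij.1 + m * ij.2 + m + n = e 0 + n * q ∧
          p * ij.1 + q * ij.2 + p + q = d * e 1 + p * q),
      MvPowerSeries.coeff (R := ℂ) (Finsupp.single 0 ij.1 + Finsupp.single 1 ij.2) Δ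

theorem coeffXX (e : Fin 2 →₀ ℕ) (a b : ℕ) (F : MvPowerSeries (Fin 2) ℂ) :
    coeff (R := ℂ) e ((X 0:MvPowerSeries (Fin 2) ℂ)^a * (X 1 ^ b * F)) =
      if a ≤ e 0 ∧ b ≤ e 1 then F (Finsupp.single 0 (e 0 - a) + Finsupp.single 1 (e 1 - b)) else 0 := by
  rw [← mul_assoc, X_pow_eq, X_pow_eq, monomial_mul_monomial, one_mul, coeff_monomial_mul, one_mul]
  congr 1
  · simp only [eq_iff_iff, Finsupp.le_def, Fin.forall_fin_two]
    simp [Finsupp.single_apply]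
  · show F _ = F _
    congr 1
    ext i
    fin_cases i <;> simp [Finsupp.single_apply, Finsupp.sub_apply]

theorem pullD_apply (Δ : MvPowerSeries (Fin 2) ℂ) (n m p q d A B : ℕ) :
    pullD Δ n m p q d (Finsupp.single 0 A + Finsupp.single 1 B) =
      ∑ ij ∈ (Finset.range (A + 1) ×ˢ Finset.range (A + 1)).filter
        (fun ij => n * ij.1 + m * ij.2 = A ∧ p * ij.1 + q * ij.2 = d * B),
      MvPowerSeries.coeff (R := ℂ) (Finsupp.single 0 ij.1 + Finsupp.single 1 ij.2) Δ := by
  have h0 : ((Finsupp.single (0:Fin 2) A + Finsupp.single 1 B : Fin 2 →₀ ℕ)) 0 = A := by simp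
  have h1 : ((Finsupp.single (0:Fin 2) A + Finsupp.single 1 B : Fin 2 →₀ ℕ)) 1 = B := by simp
  simp only [pullD, h0, h1]

theorem tildeD_apply (Δ : MvPowerSeries (Fin 2) ℂ) (n m p q d A B : ℕ) :
    tildeD Δ n m p q d (Finsupp.single 0 A + Finsupp.single 1 B) =
      (d : ℂ) * ∑ ij ∈ (Finset.range (A + n * q + 1) ×ˢ Finset.range (A + n * q + 1)).filter
        (fun ij => n * ij.1 + m * ij.2 + m + n = A + n * q ∧
          p * ij.1 + q * ij.2 + p + q = d * B + p * q),
      MvPowerSeries.coeff (R := ℂ) (Finsupp.single 0 ij.1 + Finsupp.single 1 ij.2) Δ := by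
  have h0 : ((Finsupp.single (0:Fin 2) A + Finsupp.single 1 B : Fin 2 →₀ ℕ)) 0 = A := by simp
  have h1 : ((Finsupp.single (0:Fin 2) A + Finsupp.single 1 B : Fin 2 →₀ ℕ)) 1 = B := by simp
  simp only [tildeD, h0, h1]

theorem keyLemma (p q d m n pd qd : ℕ) (hq : 0 < q) (hm : 0 < m) (hn : 0 < n)
    (hd0 : 0 < d) (hpd : p = d * pd) (hqd : q = d * qd)
    (Δ : MvPowerSeries (Fin 2) ℂ)
    (hΔ : ∀ i j : ℕ,
      MvPowerSeries.coeff (R := ℂ) (Finsupp.single 0 i + Finsupp.single 1 j) Δ ≠ 0 →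
      p * q ≤ p * i + q * j + p + q ∧ n * q ≤ n * i + m * j + m + n) :
    C (σ := Fin 2) (R := ℂ) (d : ℂ) *
        ((X 0 : MvPowerSeries (Fin 2) ℂ) ^ (m + n - 1) * (X 1 ^ (pd + qd) * pullD Δ n m p q d))
      = (X 0) ^ (n * q - 1) * (X 1 ^ (pd * q) * tildeD Δ n m p q d) := by
  ext e
  rw [coeff_C_mul, coeffXX, coeffXX, pullD_apply, tildeD_apply]
  have hnq : 0 < n * q := Nat.mul_pos hn hq
  split_ifs with h1 h2 h2
  · -- both true
    obtain ⟨h11, h12⟩ := h1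
    obtain ⟨h21, h22⟩ := h2
    have hB1 : d * (e 1 - (pd + qd)) + (p + q) = d * e 1 := by
      obtain ⟨B, hB⟩ : ∃ B, e 1 = pd + qd + B := ⟨e 1 - (pd + qd), by omega⟩
      rw [hB, Nat.add_sub_cancel_left, hpd, hqd]; ring
    have hB2 : d * (e 1 - pd * q) + p * q = d * e 1 := by
      obtain ⟨B, hB⟩ : ∃ B, e 1 = pd * q + B := ⟨e 1 - pd * q, by omega⟩
      rw [hB, Nat.add_sub_cancel_left, hpd]; ring
    congr 1
    apply Finset.sum_congr _ (fun _ _ => rfl)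
    ext ⟨i, j⟩
    simp only [Finset.mem_filter, Finset.mem_product, Finset.mem_range]
    have h3 := Nat.le_mul_of_pos_left i hn
    have h4 := Nat.le_mul_of_pos_left j hm
    constructor
    · rintro ⟨⟨hi, hj⟩, hc1, hc2⟩
      refine ⟨⟨?_, ?_⟩, ?_, ?_⟩ <;> omega
    · rintro ⟨⟨hi, hj⟩, hc1, hc2⟩
      refine ⟨⟨?_, ?_⟩, ?_, ?_⟩ <;> omega
  · -- left true, right false
    obtain ⟨h11, h12⟩ := h1
    have hB1 : d * (e 1 - (pd + qd)) + (p + q) = d * e 1 := by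
      obtain ⟨B, hB⟩ : ∃ B, e 1 = pd + qd + B := ⟨e 1 - (pd + qd), by omega⟩
      rw [hB, Nat.add_sub_cancel_left, hpd, hqd]; ring
    refine mul_eq_zero_of_right _ (Finset.sum_eq_zero fun ij hij => ?_)
    simp only [Finset.mem_filter, Finset.mem_product, Finset.mem_range] at hij
    obtain ⟨⟨hi, hj⟩, hc1, hc2⟩ := hij
    by_contra hc
    obtain ⟨hg1, hg2⟩ := hΔ ij.1 ij.2 hc
    rcases not_and_or.mp h2 with h | h
    · omega
    · have h5 : d * (e 1 + 1) ≤ d * (pd * q) := Nat.mul_le_mul (le_refl d) (by omega)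
      have h6 : d * (pd * q) = p * q := by rw [hpd]; ring
      have h7 : d * (e 1 + 1) = d * e 1 + d := by ring
      omega
  · -- left false, right true
    obtain ⟨h21, h22⟩ := h2
    have hB2 : d * (e 1 - pd * q) + p * q = d * e 1 := by
      obtain ⟨B, hB⟩ : ∃ B, e 1 = pd * q + B := ⟨e 1 - pd * q, by omega⟩
      rw [hB, Nat.add_sub_cancel_left, hpd]; ring
    have hz : (∑ ij ∈ (Finset.range (e 0 - (n*q-1) + n * q + 1) ×ˢ
          Finset.range (e 0 - (n*q-1) + n * q + 1)).filter
          (fun ij => n * ij.1 + m * ij.2 + m + n = e 0 - (n*q-1) + n * q ∧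
            p * ij.1 + q * ij.2 + p + q = d * (e 1 - pd * q) + p * q),
        MvPowerSeries.coeff (R := ℂ) (Finsupp.single 0 ij.1 + Finsupp.single 1 ij.2) Δ) = 0 := by
      refine Finset.sum_eq_zero fun ij hij => ?_
      exfalso
      simp only [Finset.mem_filter, Finset.mem_product, Finset.mem_range] at hij
      obtain ⟨⟨hi, hj⟩, hc1, hc2⟩ := hij
      rcases not_and_or.mp h1 with h | h
      · omega
      · have h5 : d * (e 1 + 1) ≤ d * (pd + qd) := Nat.mul_le_mul (le_refl d) (by omega)
        have h6 : d * (pd + qd) = p + q := by rw [hpd, hqd]; ring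
        have h7 : d * (e 1 + 1) = d * e 1 + d := by ring
        omega
    simp [hz]
  · simp

/-- Let `p, q, m, n` be positive integers, `d = gcd(p,q)`, `mp - nq = d`, and consider the
cuspidal 1-form `ω = (-q x^{q-1} - q y Δ) dx + (p y^{p-1} + p x Δ) dy` with
`(Δ, y^p - x^q)₀ ≥ pq - p - q`. Under `E(u,v) = (u^n v^{p/d}, u^m v^{q/d})` the pullback
`E^*ω = A(E) dE_x + B(E) dE_y` satisfies
`E^*ω / (u^{nq-1} v^{pq/d-1}) = v(-qn + mp u^d + D̃(u,v)) du + (pq/d) u (u^d - 1) dv`,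
stated as the two identities of the `du`- and `dv`-coefficients. Here `u = X 0`, `v = X 1`. -/
theorem stmt12 (p q d m n : ℕ) (hp : 0 < p) (hq : 0 < q) (hm : 0 < m) (hn : 0 < n)
    (hd : d = Nat.gcd p q) (hmn : m * p = n * q + d)
    (Δ : MvPowerSeries (Fin 2) ℂ)
    (hΔ : ∀ i j : ℕ,
      MvPowerSeries.coeff (R := ℂ) (Finsupp.single 0 i + Finsupp.single 1 j) Δ ≠ 0 →
      p * q ≤ p * i + q * j + p + q ∧ n * q ≤ n * i + m * j + m + n) :
    ((-(C (σ := Fin 2) (R := ℂ) (q : ℂ)) * ((X 0 : MvPowerSeries (Fin 2) ℂ) ^ n * (X 1) ^ (p / d)) ^ (q - 1)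
        - C (σ := Fin 2) (R := ℂ) (q : ℂ) * ((X 0) ^ m * (X 1) ^ (q / d)) * pullD Δ n m p q d)
          * (C (σ := Fin 2) (R := ℂ) (n : ℂ) * (X 0) ^ (n - 1) * (X 1) ^ (p / d))
      + (C (σ := Fin 2) (R := ℂ) (p : ℂ) * ((X 0 : MvPowerSeries (Fin 2) ℂ) ^ m * (X 1) ^ (q / d)) ^ (p - 1)
          + C (σ := Fin 2) (R := ℂ) (p : ℂ) * ((X 0) ^ n * (X 1) ^ (p / d)) * pullD Δ n m p q d)
          * (C (σ := Fin 2) (R := ℂ) (m : ℂ) * (X 0) ^ (m - 1) * (X 1) ^ (q / d))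
      = (X 0) ^ (n * q - 1) * (X 1) ^ (p * q / d - 1) *
          ((X 1) * (-(C (σ := Fin 2) (R := ℂ) ((q * n : ℕ) : ℂ)) + C (σ := Fin 2) (R := ℂ) ((m * p : ℕ) : ℂ) * (X 0) ^ d
            + tildeD Δ n m p q d)))
    ∧
    ((-(C (σ := Fin 2) (R := ℂ) (q : ℂ)) * ((X 0 : MvPowerSeries (Fin 2) ℂ) ^ n * (X 1) ^ (p / d)) ^ (q - 1)
        - C (σ := Fin 2) (R := ℂ) (q : ℂ) * ((X 0) ^ m * (X 1) ^ (q / d)) * pullD Δ n m p q d)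
          * (C (σ := Fin 2) (R := ℂ) ((p / d : ℕ) : ℂ) * (X 0) ^ n * (X 1) ^ (p / d - 1))
      + (C (σ := Fin 2) (R := ℂ) (p : ℂ) * ((X 0 : MvPowerSeries (Fin 2) ℂ) ^ m * (X 1) ^ (q / d)) ^ (p - 1)
          + C (σ := Fin 2) (R := ℂ) (p : ℂ) * ((X 0) ^ n * (X 1) ^ (p / d)) * pullD Δ n m p q d)
          * (C (σ := Fin 2) (R := ℂ) ((q / d : ℕ) : ℂ) * (X 0) ^ m * (X 1) ^ (q / d - 1))
      = (X 0) ^ (n * q - 1) * (X 1) ^ (p * q / d - 1) *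
          (C (σ := Fin 2) (R := ℂ) ((p * q / d : ℕ) : ℂ) * (X 0) * ((X 0) ^ d - 1))) := by
  have hdp : d ∣ p := hd ▸ Nat.gcd_dvd_left p q
  have hdq : d ∣ q := hd ▸ Nat.gcd_dvd_right p q
  have hd0 : 0 < d := hd ▸ Nat.gcd_pos_of_pos_left q hp
  obtain ⟨pd, hpd⟩ := hdp
  obtain ⟨qd, hqd⟩ := hdq
  have hpd0 : 0 < pd := by
    rcases Nat.eq_zero_or_pos pd with h | h
    · subst h; simp at hpd; omega
    · exact h
  have hqd0 : 0 < qd := by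
    rcases Nat.eq_zero_or_pos qd with h | h
    · subst h; simp at hqd; omega
    · exact h
  have hdiv1 : p / d = pd := by rw [hpd, Nat.mul_div_cancel_left _ hd0]
  have hdiv2 : q / d = qd := by rw [hqd, Nat.mul_div_cancel_left _ hd0]
  have hdiv3 : p * q / d = pd * q := by rw [hpd, mul_assoc, Nat.mul_div_cancel_left _ hd0]
  rw [hdiv1, hdiv2, hdiv3]
  have key := keyLemma p q d m n pd qd hq hm hn hd0 hpd hqd Δ hΔ
  have hnq : 0 < n * q := Nat.mul_pos hn hq
  have hpdq : 0 < pd * q := Nat.mul_pos hpd0 hq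
  have hcomm : qd * p = pd * q := by rw [hpd, hqd]; ring
  have N1 : n * (q - 1) + (n - 1) = n * q - 1 := by
    obtain ⟨a, rfl⟩ : ∃ a, q = a + 1 := ⟨q - 1, by omega⟩
    simp only [Nat.add_sub_cancel, Nat.mul_add, Nat.mul_one]; omega
  have N2 : pd * (q - 1) + pd = pd * q := by
    obtain ⟨a, rfl⟩ : ∃ a, q = a + 1 := ⟨q - 1, by omega⟩
    simp only [Nat.add_sub_cancel, Nat.mul_add, Nat.mul_one]
  have N3 : m * (p - 1) + (m - 1) = n * q - 1 + d := by
    obtain ⟨b, rfl⟩ : ∃ b, p = b + 1 := ⟨p - 1, by omega⟩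
    simp only [Nat.add_sub_cancel, Nat.mul_add, Nat.mul_one] at hmn ⊢; omega
  have N4 : qd * (p - 1) + qd = pd * q := by
    obtain ⟨b, rfl⟩ : ∃ b, p = b + 1 := ⟨p - 1, by omega⟩
    simp only [Nat.add_sub_cancel, Nat.mul_add, Nat.mul_one] at hcomm ⊢; omega
  have N7a : n * (q - 1) + n = n * q := by
    obtain ⟨a, rfl⟩ : ∃ a, q = a + 1 := ⟨q - 1, by omega⟩
    simp only [Nat.add_sub_cancel, Nat.mul_add, Nat.mul_one]
  have N7b : pd * (q - 1) + (pd - 1) = pd * q - 1 := by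
    obtain ⟨a, rfl⟩ : ∃ a, q = a + 1 := ⟨q - 1, by omega⟩
    simp only [Nat.add_sub_cancel, Nat.mul_add, Nat.mul_one]; omega
  have N8a : m * (p - 1) + m = n * q + d := by
    obtain ⟨b, rfl⟩ : ∃ b, p = b + 1 := ⟨p - 1, by omega⟩
    simp only [Nat.add_sub_cancel, Nat.mul_add, Nat.mul_one] at hmn ⊢; omega
  have N8b : qd * (p - 1) + (qd - 1) = pd * q - 1 := by
    obtain ⟨b, rfl⟩ : ∃ b, p = b + 1 := ⟨p - 1, by omega⟩
    simp only [Nat.add_sub_cancel, Nat.mul_add, Nat.mul_one] at hcomm ⊢; omega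
  set u : MvPowerSeries (Fin 2) ℂ := X 0 with hu
  set v : MvPowerSeries (Fin 2) ℂ := X 1 with hv
  set P := pullD Δ n m p q d with hP
  set T := tildeD Δ n m p q d with hT
  have G1 : (u ^ n * v ^ pd) ^ (q - 1) * (u ^ (n - 1) * v ^ pd)
      = u ^ (n * q - 1) * v ^ (pd * q) := by
    rw [mul_pow, ← pow_mul, ← pow_mul, ← N1, ← N2, pow_add, pow_add]; ring
  have G2 : (u ^ m * v ^ qd) ^ (p - 1) * (u ^ (m - 1) * v ^ qd)
      = u ^ (n * q - 1 + d) * v ^ (pd * q) := by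
    rw [mul_pow, ← pow_mul, ← pow_mul, ← N3, ← N4, pow_add, pow_add]; ring
  have G3 : (u ^ m * v ^ qd) * (u ^ (n - 1) * v ^ pd) = u ^ (m + n - 1) * v ^ (pd + qd) := by
    rw [show m + n - 1 = m + (n - 1) by omega, pow_add]; ring
  have G4 : (u ^ n * v ^ pd) * (u ^ (m - 1) * v ^ qd) = u ^ (m + n - 1) * v ^ (pd + qd) := by
    rw [show m + n - 1 = n + (m - 1) by omega, pow_add]; ring
  have G6 : v ^ (pd * q - 1) * v = v ^ (pd * q) := by
    rw [← pow_succ]; congr 1; omega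
  have cqn : C (σ := Fin 2) (R := ℂ) ((q * n : ℕ) : ℂ) = C (σ := Fin 2) (R := ℂ) (q : ℂ) * C (σ := Fin 2) (R := ℂ) (n : ℂ) := by
    rw [← map_mul]; congr 1; push_cast; ring
  have cmp : C (σ := Fin 2) (R := ℂ) ((m * p : ℕ) : ℂ) = C (σ := Fin 2) (R := ℂ) (m : ℂ) * C (σ := Fin 2) (R := ℂ) (p : ℂ) := by
    rw [← map_mul]; congr 1; push_cast; ring
  have cd : C (σ := Fin 2) (R := ℂ) (m : ℂ) * C (σ := Fin 2) (R := ℂ) (p : ℂ)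
      = C (σ := Fin 2) (R := ℂ) (n : ℂ) * C (σ := Fin 2) (R := ℂ) (q : ℂ) + C (σ := Fin 2) (R := ℂ) (d : ℂ) := by
    rw [← map_mul, ← map_mul, ← map_add]; congr 1; exact_mod_cast hmn
  constructor
  · linear_combination
      (-(C (σ := Fin 2) (R := ℂ) (q : ℂ) * C (σ := Fin 2) (R := ℂ) (n : ℂ))) * G1
      + (C (σ := Fin 2) (R := ℂ) (p : ℂ) * C (σ := Fin 2) (R := ℂ) (m : ℂ)) * G2
      + (-(C (σ := Fin 2) (R := ℂ) (q : ℂ) * C (σ := Fin 2) (R := ℂ) (n : ℂ)) * P) * G3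
      + (C (σ := Fin 2) (R := ℂ) (p : ℂ) * C (σ := Fin 2) (R := ℂ) (m : ℂ) * P) * G4
      - ((-(C (σ := Fin 2) (R := ℂ) ((q * n : ℕ) : ℂ)) + C (σ := Fin 2) (R := ℂ) ((m * p : ℕ) : ℂ) * u ^ d + T)
          * u ^ (n * q - 1)) * G6
      + (u ^ (n * q - 1) * v ^ (pd * q)) * cqn
      - (u ^ (n * q - 1) * u ^ d * v ^ (pd * q)) * cmp
      + (P * (u ^ (m + n - 1) * v ^ (pd + qd))) * cd
      + key
  · have g1 : (u ^ n * v ^ pd) ^ (q - 1) * (u ^ n * v ^ (pd - 1))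
        = u ^ (n * q) * v ^ (pd * q - 1) := by
      rw [mul_pow, ← pow_mul, ← pow_mul, ← N7a, ← N7b, pow_add, pow_add]; ring
    have g2 : (u ^ m * v ^ qd) ^ (p - 1) * (u ^ m * v ^ (qd - 1))
        = u ^ (n * q + d) * v ^ (pd * q - 1) := by
      rw [mul_pow, ← pow_mul, ← pow_mul, ← N8a, ← N8b, pow_add, pow_add]; ring
    have g3 : (u ^ m * v ^ qd) * (u ^ n * v ^ (pd - 1)) = u ^ (m + n) * v ^ (pd + qd - 1) := by
      rw [show pd + qd - 1 = qd + (pd - 1) by omega, pow_add]; ring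
    have g4 : (u ^ n * v ^ pd) * (u ^ m * v ^ (qd - 1)) = u ^ (m + n) * v ^ (pd + qd - 1) := by
      rw [show pd + qd - 1 = pd + (qd - 1) by omega, pow_add]; ring
    have g5 : u ^ (n * q - 1) * u = u ^ (n * q) := by
      rw [← pow_succ]; congr 1; omega
    have cpq1 : C (σ := Fin 2) (R := ℂ) ((pd * q : ℕ) : ℂ) = C (σ := Fin 2) (R := ℂ) (q : ℂ) * C (σ := Fin 2) (R := ℂ) (pd : ℂ) := by
      rw [← map_mul]; congr 1; push_cast; ring
    have cpq2 : C (σ := Fin 2) (R := ℂ) ((pd * q : ℕ) : ℂ) = C (σ := Fin 2) (R := ℂ) (p : ℂ) * C (σ := Fin 2) (R := ℂ) (qd : ℂ) := by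
      have h : p * qd = pd * q := by rw [hpd, hqd]; ring
      rw [← map_mul]; congr 1; rw [← h]; push_cast; ring
    linear_combination
      (-(C (σ := Fin 2) (R := ℂ) (q : ℂ) * C (σ := Fin 2) (R := ℂ) (pd : ℂ))) * g1
      + (C (σ := Fin 2) (R := ℂ) (p : ℂ) * C (σ := Fin 2) (R := ℂ) (qd : ℂ)) * g2
      + (-(C (σ := Fin 2) (R := ℂ) (q : ℂ) * C (σ := Fin 2) (R := ℂ) (pd : ℂ)) * P) * g3
      + (C (σ := Fin 2) (R := ℂ) (p : ℂ) * C (σ := Fin 2) (R := ℂ) (qd : ℂ) * P) * g4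
      + (-(C (σ := Fin 2) (R := ℂ) ((pd * q : ℕ) : ℂ) * (u ^ d - 1) * v ^ (pd * q - 1))) * g5
      + (u ^ (n * q) * v ^ (pd * q - 1) + P * (u ^ (m + n) * v ^ (pd + qd - 1))) * cpq1
      - (u ^ (n * q) * u ^ d * v ^ (pd * q - 1) + P * (u ^ (m + n) * v ^ (pd + qd - 1))) * cpq2
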